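/- arXiv:2409.03744 — 2 statements merged into one kernel-verified Lean document; each statement's English description precedes it below -/
import Mathlib

section
/- Let S be a (possibly non-unitary) operator on a finite-dimensional Hilbert space, and let R_1,...,R_m be operators with probability distribution p_1,...,p_m satisfying ‖R_j − S‖ ≤ a for all j and ‖∑_j p_j R_j − S‖ ≤ b. Then for every density matrix ρ, ‖∑_j p_j R_j ρ R_j† − S ρ S†‖₁ ≤ a² + 2b‖S‖. -/
open Matrix
open scoped ComplexOrder

noncomputable def opNorm {n : Type*} [Fintype n] [DecidableEq n] (A : Matrix n n ℂ) : ℝ :=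
  ‖Matrix.toEuclideanCLM (𝕜 := ℂ) A‖

noncomputable def traceNorm {n : Type*} [Fintype n] [DecidableEq n] (A : Matrix n n ℂ) : ℝ :=
  (((Matrix.posSemidef_conjTranspose_mul_self A).1.eigenvectorUnitary : Matrix n n ℂ) *
    diagonal (((↑) : ℝ → ℂ) ∘ (√·) ∘ (Matrix.posSemidef_conjTranspose_mul_self A).1.eigenvalues) *
    (star (Matrix.posSemidef_conjTranspose_mul_self A).1.eigenvectorUnitary : Matrix n n ℂ)).trace.re

section Aux

variable {n : Type*} [Fintype n] [DecidableEq n]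

/-- Parseval identity for an orthonormal basis. -/
lemma gml_parseval {ι E : Type*} [Fintype ι] [NormedAddCommGroup E] [InnerProductSpace ℂ E]
    (b : OrthonormalBasis ι ℂ E) (x : E) :
    ‖x‖ ^ 2 = ∑ i, ‖(inner ℂ (b i) x : ℂ)‖ ^ 2 := by
  have h := b.sum_inner_mul_inner x x
  have h2 : ∀ i, (inner ℂ x (b i) * inner ℂ (b i) x : ℂ) = (‖(inner ℂ (b i) x : ℂ)‖ : ℂ) ^ 2 := by
    intro i
    rw [← inner_conj_symm (b i) x, RCLike.mul_conj, RCLike.norm_conj]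
    norm_num
  rw [← @inner_self_eq_norm_sq ℂ, ← h]
  simp_rw [h2]
  rw [map_sum]
  refine (Finset.sum_congr rfl fun i _ => ?_)
  rw [← Complex.ofReal_pow]
  exact Complex.ofReal_re _

/-- Bessel's inequality for a pairwise-orthogonal family of vectors each of which is
zero or a unit vector. -/
lemma gml_bessel {E : Type*} [NormedAddCommGroup E] [InnerProductSpace ℂ E]
    (u : n → E) (h0 : ∀ i j, i ≠ j → (inner ℂ (u i) (u j) : ℂ) = 0)
    (h1 : ∀ i, u i = 0 ∨ ‖u i‖ = 1) (x : E) :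
    ∑ i, ‖(inner ℂ (u i) x : ℂ)‖ ^ 2 ≤ ‖x‖ ^ 2 := by
  classical
  have horth : Orthonormal ℂ (fun i : {i // u i ≠ 0} => u i.1) := by
    rw [orthonormal_iff_ite]
    intro i j
    by_cases hij : i = j
    · subst hij
      simp only [if_pos rfl]
      rcases h1 i.1 with h | h
      · exact absurd h i.2
      · rw [inner_self_eq_norm_sq_to_K, h]; norm_num
    · rw [if_neg hij]
      exact h0 i.1 j.1 (fun hc => hij (Subtype.ext hc))
  calc ∑ i, ‖(inner ℂ (u i) x : ℂ)‖ ^ 2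
      = ∑ i ∈ Finset.univ.filter (fun i => u i ≠ 0), ‖(inner ℂ (u i) x : ℂ)‖ ^ 2 := by
        rw [Finset.sum_filter]
        refine Finset.sum_congr rfl fun i _ => ?_
        by_cases h : u i = 0
        · simp [h]
        · simp [h]
    _ = ∑ i : {i // u i ≠ 0}, ‖(inner ℂ (u i.1) x : ℂ)‖ ^ 2 := by
        rw [← Finset.sum_subtype (Finset.univ.filter (fun i => u i ≠ 0))
          (fun i => by simp) (fun i => ‖(inner ℂ (u i) x : ℂ)‖ ^ 2)]
    _ ≤ ‖x‖ ^ 2 := horth.sum_inner_products_le x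

lemma gml_norm_matL_le (A : Matrix n n ℂ) (x : EuclideanSpace ℂ n) :
    ‖toEuclideanLin A x‖ ≤ opNorm A * ‖x‖ := by
  have h : toEuclideanLin A x = Matrix.toEuclideanCLM (𝕜 := ℂ) A x := by
    rw [← Matrix.coe_toEuclideanCLM_eq_toEuclideanLin]; rfl
  rw [h]
  exact (Matrix.toEuclideanCLM (𝕜 := ℂ) A).le_opNorm x

lemma gml_inner_matL (A : Matrix n n ℂ) (x y : EuclideanSpace ℂ n) :
    (inner ℂ (toEuclideanLin Aᴴ x) y : ℂ) = inner ℂ x (toEuclideanLin A y) := by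
  rw [Matrix.toEuclideanLin_conjTranspose_eq_adjoint, LinearMap.adjoint_inner_left]

lemma gml_matL_mul (A B : Matrix n n ℂ) (x : EuclideanSpace ℂ n) :
    toEuclideanLin (A * B) x = toEuclideanLin A (toEuclideanLin B x) := by
  simp [Matrix.toEuclideanLin_apply, mulVec_mulVec]

/-- Squared Frobenius (Hilbert–Schmidt) norm. -/
noncomputable def gml_frobSq (A : Matrix n n ℂ) : ℝ :=
  ∑ j, ‖toEuclideanLin A (EuclideanSpace.basisFun n ℂ j)‖ ^ 2

lemma gml_frobSq_nonneg (A : Matrix n n ℂ) : 0 ≤ gml_frobSq A :=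
  Finset.sum_nonneg fun _ _ => sq_nonneg _

lemma gml_frobSq_eq_trace (A : Matrix n n ℂ) :
    gml_frobSq A = (Matrix.trace (Aᴴ * A)).re := by
  have h : ∀ j, (‖toEuclideanLin A (EuclideanSpace.basisFun n ℂ j)‖ : ℝ) ^ 2
      = ((Aᴴ * A) j j).re := by
    intro j
    rw [← @inner_self_eq_norm_sq ℂ, ← gml_inner_matL, ← gml_matL_mul]
    have h1 : toEuclideanLin (Aᴴ * A) (EuclideanSpace.basisFun n ℂ j)
        = (WithLp.equiv 2 (n → ℂ)).symm ((Aᴴ * A) *ᵥ Pi.single j 1) := by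
      rw [Matrix.toEuclideanLin_apply]
      congr 1
      simp [EuclideanSpace.basisFun_apply]
    rw [h1, EuclideanSpace.basisFun_apply, EuclideanSpace.inner_single_right]
    simp [mulVec_single]
  simp_rw [gml_frobSq, h, Matrix.trace, Matrix.diag, Complex.re_sum]

lemma gml_frobSq_mul_le (A B : Matrix n n ℂ) :
    gml_frobSq (A * B) ≤ opNorm A ^ 2 * gml_frobSq B := by
  rw [gml_frobSq, gml_frobSq, Finset.mul_sum]
  refine Finset.sum_le_sum fun j _ => ?_
  rw [gml_matL_mul, ← mul_pow]
  exact pow_le_pow_left₀ (norm_nonneg _) (gml_norm_matL_le A _) 2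

lemma gml_frobSq_smul (c : ℂ) (A : Matrix n n ℂ) :
    gml_frobSq (c • A) = ‖c‖ ^ 2 * gml_frobSq A := by
  rw [gml_frobSq, gml_frobSq, Finset.mul_sum]
  refine Finset.sum_congr rfl fun j _ => ?_
  rw [_root_.map_smul, LinearMap.smul_apply, norm_smul, mul_pow]

/-- Transfer lemma: sum of squared norms of `Aᴴ` applied to an orthogonal family of
(zero-or-unit) vectors is at most the squared Frobenius norm of `A`. -/
lemma gml_sum_sq_le_frobSq (A : Matrix n n ℂ) (u : n → EuclideanSpace ℂ n)
    (h0 : ∀ i j, i ≠ j → (inner ℂ (u i) (u j) : ℂ) = 0)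
    (h1 : ∀ i, u i = 0 ∨ ‖u i‖ = 1) :
    ∑ i, ‖toEuclideanLin Aᴴ (u i)‖ ^ 2 ≤ gml_frobSq A := by
  have key : ∀ i, ‖toEuclideanLin Aᴴ (u i)‖ ^ 2
      = ∑ j, ‖(inner ℂ (u i) (toEuclideanLin A (EuclideanSpace.basisFun n ℂ j)) : ℂ)‖ ^ 2 := by
    intro i
    rw [gml_parseval (EuclideanSpace.basisFun n ℂ)]
    refine Finset.sum_congr rfl fun j _ => ?_
    rw [← norm_inner_symm, gml_inner_matL]
  simp_rw [key]
  rw [Finset.sum_comm]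
  exact Finset.sum_le_sum fun j _ => gml_bessel u h0 h1 _

lemma gml_traceNorm_eq_sum_sqrt (A : Matrix n n ℂ) :
    traceNorm A
      = ∑ i, Real.sqrt ((Matrix.posSemidef_conjTranspose_mul_self A).1.eigenvalues i) := by
  unfold traceNorm
  rw [Matrix.trace_mul_cycle, Matrix.UnitaryGroup.star_mul_self, one_mul, trace_diagonal]
  rw [Complex.re_sum]
  exact Finset.sum_congr rfl fun i _ => by simp

lemma gml_matL_eigen (A : Matrix n n ℂ) (i : n) :
    toEuclideanLin (Aᴴ * A)
        ((Matrix.posSemidef_conjTranspose_mul_self A).1.eigenvectorBasis i)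
      = (((Matrix.posSemidef_conjTranspose_mul_self A).1.eigenvalues i : ℝ) : ℂ) •
        (Matrix.posSemidef_conjTranspose_mul_self A).1.eigenvectorBasis i := by
  have hmv := (Matrix.posSemidef_conjTranspose_mul_self A).1.mulVec_eigenvectorBasis i
  rw [Matrix.toEuclideanLin_apply]
  rw [hmv,
    RCLike.real_smul_eq_coe_smul (K := ℂ)]
  rfl

lemma gml_sqrt_eigenvalue_eq_norm (A : Matrix n n ℂ) (i : n) :
    Real.sqrt ((Matrix.posSemidef_conjTranspose_mul_self A).1.eigenvalues i)
      = ‖toEuclideanLin A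
          ((Matrix.posSemidef_conjTranspose_mul_self A).1.eigenvectorBasis i)‖ := by
  set h := Matrix.posSemidef_conjTranspose_mul_self A
  set v := h.1.eigenvectorBasis
  set μ := h.1.eigenvalues
  have h2 : ‖toEuclideanLin A (v i)‖ ^ 2 = μ i := by
    rw [← @inner_self_eq_norm_sq ℂ, ← gml_inner_matL, ← gml_matL_mul, gml_matL_eigen,
      inner_smul_left]
    have hv1 : ‖v i‖ = 1 := v.orthonormal.1 i
    rw [inner_self_eq_norm_sq_to_K, hv1]
    simp
    rfl
  rw [← h2, Real.sqrt_sq (norm_nonneg _)]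

/-- Master lemma: the trace norm of `∑ k, C k * (D k)ᴴ` is bounded by
`∑ k, ‖C k‖_F * ‖D k‖_F`. -/
lemma gml_traceNorm_factor_le {ι : Type*} [Fintype ι] (C D : ι → Matrix n n ℂ) :
    traceNorm (∑ k, C k * (D k)ᴴ)
      ≤ ∑ k, Real.sqrt (gml_frobSq (C k)) * Real.sqrt (gml_frobSq (D k)) := by
  classical
  set A := ∑ k, C k * (D k)ᴴ with hA
  set h := Matrix.posSemidef_conjTranspose_mul_self A
  set v := h.1.eigenvectorBasis with hv
  set w : n → EuclideanSpace ℂ n := fun i => toEuclideanLin A (v i) with hw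
  set u : n → EuclideanSpace ℂ n := fun i => ((‖w i‖ : ℝ)⁻¹ : ℂ) • w i with hu
  have hworth : ∀ i j, i ≠ j → (inner ℂ (w i) (w j) : ℂ) = 0 := by
    intro i j hij
    have e1 : (inner ℂ (w i) (w j) : ℂ) = inner ℂ (toEuclideanLin Aᴴ (w i)) (v j) := by
      rw [gml_inner_matL]
    rw [e1, hw, ← gml_matL_mul, gml_matL_eigen, inner_smul_left]
    rw [v.orthonormal.2 hij, mul_zero]
  have hu0 : ∀ i j, i ≠ j → (inner ℂ (u i) (u j) : ℂ) = 0 := by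
    intro i j hij
    rw [hu]
    simp only [inner_smul_left, inner_smul_right, hworth i j hij, mul_zero]
  have hu1 : ∀ i, u i = 0 ∨ ‖u i‖ = 1 := by
    intro i
    by_cases hwi : w i = 0
    · left; rw [hu]; simp [hwi]
    · right
      have hne : ‖w i‖ ≠ 0 := norm_ne_zero_iff.mpr hwi
      rw [hu]
      simp only [norm_smul, norm_inv, Complex.norm_real, Real.norm_eq_abs,
        abs_of_nonneg (norm_nonneg (w i))]
      exact inv_mul_cancel₀ hne
  have hre : ∀ i, ‖w i‖ = Complex.re (inner ℂ (u i) (w i)) := by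
    intro i
    by_cases hwi : w i = 0
    · simp [hwi, hu]
    · have hne : ‖w i‖ ≠ 0 := norm_ne_zero_iff.mpr hwi
      rw [hu, inner_smul_left, inner_self_eq_norm_sq_to_K, map_inv₀, Complex.conj_ofReal]
      norm_cast
      field_simp
      have e : ∀ x y : ℝ, ((x : ℂ) * (y : ℂ)).re = x * y := fun x y => by simp
      erw [e, one_div, sq, inv_mul_cancel_left₀ hne]
  have hwsum : ∀ i, (inner ℂ (u i) (w i) : ℂ)
      = ∑ k, inner ℂ (toEuclideanLin (C k)ᴴ (u i)) (toEuclideanLin (D k)ᴴ (v i)) := by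
    intro i
    have e : w i = ∑ k, toEuclideanLin (C k * (D k)ᴴ) (v i) := by
      rw [hw, hA, map_sum]
      simp
    rw [e, inner_sum]
    refine Finset.sum_congr rfl fun k _ => ?_
    rw [gml_matL_mul, ← gml_inner_matL]
  have step : ∀ i, Complex.re (inner ℂ (u i) (w i))
      ≤ ∑ k, ‖toEuclideanLin (C k)ᴴ (u i)‖ * ‖toEuclideanLin (D k)ᴴ (v i)‖ := by
    intro i
    rw [hwsum i, Complex.re_sum]
    refine Finset.sum_le_sum fun k _ => ?_
    refine le_trans (Complex.re_le_norm _) ?_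
    exact norm_inner_le_norm _ _
  calc traceNorm A = ∑ i, ‖w i‖ := by
        rw [gml_traceNorm_eq_sum_sqrt]
        exact Finset.sum_congr rfl fun i _ => gml_sqrt_eigenvalue_eq_norm A i
    _ = ∑ i, Complex.re (inner ℂ (u i) (w i)) := Finset.sum_congr rfl fun i _ => hre i
    _ ≤ ∑ i, ∑ k, ‖toEuclideanLin (C k)ᴴ (u i)‖ * ‖toEuclideanLin (D k)ᴴ (v i)‖ :=
        Finset.sum_le_sum fun i _ => step i
    _ = ∑ k, ∑ i, ‖toEuclideanLin (C k)ᴴ (u i)‖ * ‖toEuclideanLin (D k)ᴴ (v i)‖ :=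
        Finset.sum_comm
    _ ≤ ∑ k, Real.sqrt (gml_frobSq (C k)) * Real.sqrt (gml_frobSq (D k)) := by
        refine Finset.sum_le_sum fun k _ => ?_
        have hC : ∑ i, ‖toEuclideanLin (C k)ᴴ (u i)‖ ^ 2 ≤ gml_frobSq (C k) :=
          gml_sum_sq_le_frobSq _ u hu0 hu1
        have hD : ∑ i, ‖toEuclideanLin (D k)ᴴ (v i)‖ ^ 2 ≤ gml_frobSq (D k) :=
          gml_sum_sq_le_frobSq _ (fun i => v i) (fun i j hij => v.orthonormal.2 hij)
            (fun i => Or.inr (v.orthonormal.1 i))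
        have cs := Finset.sum_mul_sq_le_sq_mul_sq Finset.univ
          (fun i => ‖toEuclideanLin (C k)ᴴ (u i)‖) (fun i => ‖toEuclideanLin (D k)ᴴ (v i)‖)
        have hnn : 0 ≤ ∑ i, ‖toEuclideanLin (C k)ᴴ (u i)‖ * ‖toEuclideanLin (D k)ᴴ (v i)‖ :=
          Finset.sum_nonneg fun i _ => mul_nonneg (norm_nonneg _) (norm_nonneg _)
        have h1 : (∑ i, ‖toEuclideanLin (C k)ᴴ (u i)‖ * ‖toEuclideanLin (D k)ᴴ (v i)‖)
            ≤ Real.sqrt ((∑ i, ‖toEuclideanLin (C k)ᴴ (u i)‖ ^ 2) *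
              (∑ i, ‖toEuclideanLin (D k)ᴴ (v i)‖ ^ 2)) := by
          rw [Real.le_sqrt hnn (mul_nonneg (Finset.sum_nonneg fun i _ => sq_nonneg _)
            (Finset.sum_nonneg fun i _ => sq_nonneg _))]
          exact cs
        refine le_trans h1 ?_
        rw [Real.sqrt_mul (Finset.sum_nonneg fun i _ => sq_nonneg _)]
        exact mul_le_mul (Real.sqrt_le_sqrt hC) (Real.sqrt_le_sqrt hD) (Real.sqrt_nonneg _)
          (Real.sqrt_nonneg _)

end Aux

lemma gml_opNorm_nonneg {n : Type*} [Fintype n] [DecidableEq n] (A : Matrix n n ℂ) :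
    0 ≤ opNorm A := norm_nonneg _

open scoped MatrixOrder in
lemma gml_exists_sqrt {n : Type*} [Fintype n] [DecidableEq n] (ρ : Matrix n n ℂ)
    (hρ : ρ.PosSemidef) : ∃ σ : Matrix n n ℂ, σᴴ = σ ∧ σ * σ = ρ :=
  ⟨CFC.sqrt ρ, (CFC.sqrt_nonneg ρ).posSemidef.1, CFC.sqrt_mul_sqrt_self ρ hρ.nonneg⟩

/-- Generalized mixing lemma for possibly non-unitary evolution. -/
theorem generalized_mixing_lemma {N m : ℕ} (S : Matrix (Fin N) (Fin N) ℂ)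
    (R : Fin m → Matrix (Fin N) (Fin N) ℂ)
    (p : Fin m → ℝ) (hp : ∀ j, 0 ≤ p j) (hp1 : ∑ j, p j = 1)
    (a b : ℝ)
    (ha : ∀ j, opNorm (R j - S) ≤ a)
    (hb : opNorm ((∑ j, (p j : ℂ) • R j) - S) ≤ b)
    (ρ : Matrix (Fin N) (Fin N) ℂ) (hρ : ρ.PosSemidef) (hρ1 : ρ.trace = 1) :
    traceNorm ((∑ j, (p j : ℂ) • (R j * ρ * (R j)ᴴ)) - S * ρ * Sᴴ)
      ≤ a ^ 2 + 2 * b * opNorm S := by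
  classical
  obtain ⟨σ, hσh, hσσ⟩ := gml_exists_sqrt ρ hρ
  set Err : Matrix (Fin N) (Fin N) ℂ := (∑ j, (p j : ℂ) • R j) - S with hErr
  have hps : (∑ j, (p j : ℂ)) = 1 := by
    rw [← Complex.ofReal_sum, hp1, Complex.ofReal_one]
  set C : (Fin m ⊕ Fin 2) → Matrix (Fin N) (Fin N) ℂ :=
    Sum.elim (fun j => ((Real.sqrt (p j) : ℝ) : ℂ) • ((R j - S) * σ)) ![Err * σ, S * σ] with hC
  set D : (Fin m ⊕ Fin 2) → Matrix (Fin N) (Fin N) ℂ :=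
    Sum.elim (fun j => ((Real.sqrt (p j) : ℝ) : ℂ) • ((R j - S) * σ)) ![S * σ, Err * σ] with hD
  -- simplification of the products C k * (D k)ᴴ
  have hXY : ∀ X Y : Matrix (Fin N) (Fin N) ℂ, (X * σ) * (Y * σ)ᴴ = X * ρ * Yᴴ := by
    intro X Y
    rw [conjTranspose_mul, hσh, ← Matrix.mul_assoc, Matrix.mul_assoc X σ σ, hσσ,
      Matrix.mul_assoc]
  have hstar : ∀ r : ℝ, star ((r : ℝ) : ℂ) = ((r : ℝ) : ℂ) := by
    intro r; rw [Complex.star_def, Complex.conj_ofReal]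
  have hCD : ∀ j : Fin m, C (Sum.inl j) * (D (Sum.inl j))ᴴ
      = (p j : ℂ) • ((R j - S) * ρ * (R j - S)ᴴ) := by
    intro j
    rw [hC, hD]
    simp only [Sum.elim_inl]
    rw [conjTranspose_smul, hstar, smul_mul_assoc, mul_smul_comm, hXY, smul_smul]
    rw [← Complex.ofReal_mul, Real.mul_self_sqrt (hp j)]
  have hCD0 : C (Sum.inr 0) * (D (Sum.inr 0))ᴴ = Err * ρ * Sᴴ := by
    rw [hC, hD]; simp only [Sum.elim_inr, Matrix.cons_val_zero]; exact hXY Err S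
  have hCD1 : C (Sum.inr 1) * (D (Sum.inr 1))ᴴ = S * ρ * Errᴴ := by
    rw [hC, hD]; simp only [Sum.elim_inr, Matrix.cons_val_one, Matrix.head_cons]; exact hXY S Err
  -- the decomposition
  have e1 : Err * ρ * Sᴴ = (∑ j, (p j : ℂ) • (R j * ρ * Sᴴ)) - S * ρ * Sᴴ := by
    rw [hErr, sub_mul, sub_mul, Finset.sum_mul, Finset.sum_mul]
    congr 1
    exact Finset.sum_congr rfl fun j _ => by rw [smul_mul_assoc, smul_mul_assoc]
  have e2 : S * ρ * Errᴴ = (∑ j, (p j : ℂ) • (S * ρ * (R j)ᴴ)) - S * ρ * Sᴴ := by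
    rw [hErr, conjTranspose_sub, mul_sub]
    congr 1
    rw [conjTranspose_sum, Finset.mul_sum]
    refine Finset.sum_congr rfl fun j _ => ?_
    rw [conjTranspose_smul, hstar, mul_smul_comm]
  have e3 : ∀ j : Fin m, (p j : ℂ) • ((R j - S) * ρ * (R j - S)ᴴ)
      = (p j : ℂ) • (R j * ρ * (R j)ᴴ) - (p j : ℂ) • (R j * ρ * Sᴴ)
        - (p j : ℂ) • (S * ρ * (R j)ᴴ) + (p j : ℂ) • (S * ρ * Sᴴ) := by
    intro j
    have hh : (R j - S) * ρ * (R j - S)ᴴ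
        = R j * ρ * (R j)ᴴ - R j * ρ * Sᴴ - (S * ρ * (R j)ᴴ - S * ρ * Sᴴ) := by
      rw [conjTranspose_sub, sub_mul, sub_mul, mul_sub, mul_sub]
    rw [hh, smul_sub, smul_sub, smul_sub]
    abel
  have hsmul1 : (∑ j, (p j : ℂ) • (S * ρ * Sᴴ)) = S * ρ * Sᴴ := by
    rw [← Finset.sum_smul, hps, one_smul]
  have hdec : (∑ j, (p j : ℂ) • (R j * ρ * (R j)ᴴ)) - S * ρ * Sᴴ = ∑ k, C k * (D k)ᴴ := by
    rw [Fintype.sum_sum_type]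
    rw [Finset.sum_congr rfl fun j _ => hCD j]
    rw [Fin.sum_univ_two, hCD0, hCD1, e1, e2]
    rw [Finset.sum_congr rfl fun j _ => e3 j]
    rw [Finset.sum_add_distrib, Finset.sum_sub_distrib, Finset.sum_sub_distrib, hsmul1]
    abel
  rw [hdec]
  refine le_trans (gml_traceNorm_factor_le C D) ?_
  -- bounds
  have hσ1 : Real.sqrt (gml_frobSq σ) = 1 := by
    rw [gml_frobSq_eq_trace, hσh, hσσ, hρ1]
    norm_num
  have hXσ : ∀ X : Matrix (Fin N) (Fin N) ℂ, Real.sqrt (gml_frobSq (X * σ)) ≤ opNorm X := by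
    intro X
    refine le_trans (Real.sqrt_le_sqrt (gml_frobSq_mul_le X σ)) ?_
    rw [Real.sqrt_mul (sq_nonneg _), Real.sqrt_sq (gml_opNorm_nonneg X), hσ1, mul_one]
  have hEb : Real.sqrt (gml_frobSq (Err * σ)) ≤ b := le_trans (hXσ Err) hb
  have hSb : Real.sqrt (gml_frobSq (S * σ)) ≤ opNorm S := hXσ S
  have hEj : ∀ j, Real.sqrt (gml_frobSq ((R j - S) * σ)) ≤ a :=
    fun j => le_trans (hXσ _) (ha j)
  have hb0 : 0 ≤ b := le_trans (gml_opNorm_nonneg _) hb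
  have hscale : ∀ j : Fin m, Real.sqrt (gml_frobSq (C (Sum.inl j)))
      = Real.sqrt (p j) * Real.sqrt (gml_frobSq ((R j - S) * σ)) := by
    intro j
    rw [hC]
    simp only [Sum.elim_inl]
    rw [gml_frobSq_smul, Complex.norm_real, Real.norm_eq_abs,
      abs_of_nonneg (Real.sqrt_nonneg _), Real.sq_sqrt (hp j), Real.sqrt_mul (hp j)]
  have hDC : ∀ j : Fin m, D (Sum.inl j) = C (Sum.inl j) := by
    intro j; rw [hC, hD]; simp only [Sum.elim_inl]
  have c0 : C (Sum.inr 0) = Err * σ := by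
    rw [hC]; simp only [Sum.elim_inr, Matrix.cons_val_zero]
  have d0 : D (Sum.inr 0) = S * σ := by
    rw [hD]; simp only [Sum.elim_inr, Matrix.cons_val_zero]
  have c1 : C (Sum.inr 1) = S * σ := by
    rw [hC]; simp only [Sum.elim_inr, Matrix.cons_val_one, Matrix.head_cons, Matrix.cons_val_zero]
  have d1 : D (Sum.inr 1) = Err * σ := by
    rw [hD]; simp only [Sum.elim_inr, Matrix.cons_val_one, Matrix.head_cons, Matrix.cons_val_zero]
  rw [Fintype.sum_sum_type, Fin.sum_univ_two, c0, d0, c1, d1]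
  have sum1 : ∑ j : Fin m,
      Real.sqrt (gml_frobSq (C (Sum.inl j))) * Real.sqrt (gml_frobSq (D (Sum.inl j)))
      ≤ a ^ 2 := by
    have step : ∀ j : Fin m,
        Real.sqrt (gml_frobSq (C (Sum.inl j))) * Real.sqrt (gml_frobSq (D (Sum.inl j)))
        ≤ p j * a ^ 2 := by
      intro j
      rw [hDC j, hscale j]
      have ht0 : 0 ≤ Real.sqrt (gml_frobSq ((R j - S) * σ)) := Real.sqrt_nonneg _
      have htt : Real.sqrt (gml_frobSq ((R j - S) * σ)) * Real.sqrt (gml_frobSq ((R j - S) * σ))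
          ≤ a ^ 2 := by
        rw [pow_two]
        exact mul_self_le_mul_self ht0 (hEj j)
      calc Real.sqrt (p j) * Real.sqrt (gml_frobSq ((R j - S) * σ)) *
            (Real.sqrt (p j) * Real.sqrt (gml_frobSq ((R j - S) * σ)))
          = (Real.sqrt (p j) * Real.sqrt (p j)) *
            (Real.sqrt (gml_frobSq ((R j - S) * σ)) * Real.sqrt (gml_frobSq ((R j - S) * σ))) := by
            ring
        _ = p j * (Real.sqrt (gml_frobSq ((R j - S) * σ)) *
            Real.sqrt (gml_frobSq ((R j - S) * σ))) := by
            rw [Real.mul_self_sqrt (hp j)]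
        _ ≤ p j * a ^ 2 := mul_le_mul_of_nonneg_left htt (hp j)
    calc ∑ j : Fin m,
        Real.sqrt (gml_frobSq (C (Sum.inl j))) * Real.sqrt (gml_frobSq (D (Sum.inl j)))
        ≤ ∑ j, p j * a ^ 2 := Finset.sum_le_sum fun j _ => step j
      _ = a ^ 2 := by rw [← Finset.sum_mul, hp1, one_mul]
  have t0 : Real.sqrt (gml_frobSq (Err * σ)) * Real.sqrt (gml_frobSq (S * σ)) ≤ b * opNorm S :=
    mul_le_mul hEb hSb (Real.sqrt_nonneg _) hb0
  have t1 : Real.sqrt (gml_frobSq (S * σ)) * Real.sqrt (gml_frobSq (Err * σ))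
      ≤ opNorm S * b :=
    mul_le_mul hSb hEb (Real.sqrt_nonneg _) (gml_opNorm_nonneg S)
  have := add_le_add sum1 (add_le_add t0 t1)
  linarith
end

section
/- Let S, R_1,...,R_m be operators with ‖S‖ ≤ 1, a probability distribution p_1,...,p_m, and constants a,b ≥ 0 such that ‖R_j − S‖ ≤ a for all j and ‖∑_j p_j R_j − S‖ ≤ b. Then for every density matrix ρ, ‖∑_j p_j R_j ρ R_j† − S ρ S†‖₁ ≤ a² + 2b. -/
open Matrix
open scoped ComplexOrder

lemma mulVec_norm_sq_le {n : Type*} [Fintype n] [DecidableEq n] (A : Matrix n n ℂ) (v : n → ℂ) :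
    ∑ i, ‖(A *ᵥ v) i‖ ^ 2 ≤ opNorm A ^ 2 * ∑ i, ‖v i‖ ^ 2 := by
  set x : EuclideanSpace ℂ n := (WithLp.equiv 2 (n → ℂ)).symm v with hx
  have h := (toEuclideanCLM (𝕜 := ℂ) A).le_opNorm x
  have hAx : toEuclideanCLM (𝕜 := ℂ) A x = (WithLp.equiv 2 (n → ℂ)).symm (A *ᵥ v) := by
    rw [hx]; exact toEuclideanCLM_toLp A v
  have h1 : ‖toEuclideanCLM (𝕜 := ℂ) A x‖ ^ 2 = ∑ i, ‖(A *ᵥ v) i‖ ^ 2 := by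
    rw [hAx, EuclideanSpace.norm_eq, Real.sq_sqrt (by positivity)]
    simp
  have h2 : ‖x‖ ^ 2 = ∑ i, ‖v i‖ ^ 2 := by
    rw [EuclideanSpace.norm_eq, Real.sq_sqrt (by positivity)]
    simp [hx]
  calc ∑ i, ‖(A *ᵥ v) i‖ ^ 2 = ‖toEuclideanCLM (𝕜 := ℂ) A x‖ ^ 2 := h1.symm
    _ ≤ (opNorm A * ‖x‖) ^ 2 := by
        apply pow_le_pow_left₀ (norm_nonneg _) h
    _ = opNorm A ^ 2 * ∑ i, ‖v i‖ ^ 2 := by rw [mul_pow, h2]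

lemma diag_entry_re {n : Type*} [Fintype n] [DecidableEq n] (W : Matrix n n ℂ) (i : n) :
    ((Wᴴ * W) i i).re = ∑ k, ‖W k i‖ ^ 2 := by
  simp [Matrix.mul_apply, conjTranspose_apply, Complex.sq_norm,
    Complex.normSq_apply]

lemma trace_conj_le {n : Type*} [Fintype n] [DecidableEq n] {ρ : Matrix n n ℂ}
    (hρ : ρ.PosSemidef) (B : Matrix n n ℂ) :
    (B * ρ * Bᴴ).trace.re ≤ opNorm B ^ 2 * ρ.trace.re := by
  classical
  set V : Matrix n n ℂ := ↑(hρ.1.eigenvectorUnitary) with hV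
  set d : n → ℝ := hρ.1.eigenvalues with hd
  have hspec : ρ = V * Matrix.diagonal (Complex.ofReal ∘ d) * star V := hρ.1.spectral_theorem
  have hVV : star V * V = 1 := Unitary.coe_star_mul_self hρ.1.eigenvectorUnitary
  have hcol : ∀ i, ∑ k, ‖V k i‖ ^ 2 = 1 := by
    intro i
    have h1 : ((Vᴴ * V) i i).re = 1 := by
      rw [← Matrix.star_eq_conjTranspose, hVV]; simp [Matrix.one_apply]
    rw [diag_entry_re] at h1; exact h1
  have hd0 : ∀ i, 0 ≤ d i := hρ.eigenvalues_nonneg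
  have htrρ : ρ.trace.re = ∑ i, d i := by
    rw [hspec, Matrix.trace_mul_cycle, hVV, Matrix.one_mul, Matrix.trace_diagonal]
    simp
  set W : Matrix n n ℂ := B * V with hW
  have hBρB : B * ρ * Bᴴ = W * Matrix.diagonal (Complex.ofReal ∘ d) * Wᴴ := by
    rw [hspec, hW, Matrix.conjTranspose_mul, ← Matrix.star_eq_conjTranspose V]
    noncomm_ring
  have htr : (B * ρ * Bᴴ).trace.re = ∑ i, d i * ∑ k, ‖W k i‖ ^ 2 := by
    rw [hBρB, Matrix.trace_mul_cycle, Matrix.trace, Complex.re_sum]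
    congr 1; ext i
    rw [Matrix.diag_apply, Matrix.mul_diagonal, Function.comp_apply, Complex.mul_re,
      Complex.ofReal_re, Complex.ofReal_im, mul_zero, sub_zero, diag_entry_re]
    ring
  have hWcol : ∀ i, ∑ k, ‖W k i‖ ^ 2 ≤ opNorm B ^ 2 := by
    intro i
    have : ∀ k, W k i = (B *ᵥ (fun j => V j i)) k := by
      intro k; simp [hW, Matrix.mul_apply, Matrix.mulVec, dotProduct]
    calc ∑ k, ‖W k i‖ ^ 2 = ∑ k, ‖(B *ᵥ (fun j => V j i)) k‖ ^ 2 := by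
          exact Finset.sum_congr rfl fun k _ => by rw [this k]
      _ ≤ opNorm B ^ 2 * ∑ k, ‖V k i‖ ^ 2 := mulVec_norm_sq_le B _
      _ = opNorm B ^ 2 := by rw [hcol i, mul_one]
  rw [htr, htrρ, Finset.mul_sum]
  apply Finset.sum_le_sum
  intro i _
  rw [mul_comm (opNorm B ^ 2) (d i)]
  exact mul_le_mul_of_nonneg_left (hWcol i) (hd0 i)

lemma traceNorm_hermitian {n : Type*} [Fintype n] [DecidableEq n] {X : Matrix n n ℂ}
    (hX : X.IsHermitian) : traceNorm X = ∑ i, |hX.eigenvalues i| := by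
  classical
  set V : Matrix n n ℂ := ↑(hX.eigenvectorUnitary) with hV
  set d : n → ℝ := hX.eigenvalues with hd
  have hVV : star V * V = 1 := Unitary.coe_star_mul_self hX.eigenvectorUnitary
  have hVV' : V * star V = 1 := Unitary.coe_mul_star_self hX.eigenvectorUnitary
  have hspec : X = V * Matrix.diagonal (Complex.ofReal ∘ d) * star V := hX.spectral_theorem
  set Q : Matrix n n ℂ := V * Matrix.diagonal (Complex.ofReal ∘ (fun i => |d i|)) * Vᴴ with hQ
  have hQpsd : Q.PosSemidef := by
    apply Matrix.PosSemidef.mul_mul_conjTranspose_same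
    apply Matrix.PosSemidef.diagonal
    intro i
    simp only [Function.comp_apply]
    rw [Complex.le_def]
    simp [abs_nonneg]
  have hQsq : Q ^ 2 = Xᴴ * X := by
    rw [hX.eq, hspec, pow_two, hQ]
    rw [Matrix.star_eq_conjTranspose] at hVV ⊢
    calc (V * diagonal (Complex.ofReal ∘ fun i => |d i|) * Vᴴ) *
          (V * diagonal (Complex.ofReal ∘ fun i => |d i|) * Vᴴ)
        = V * (diagonal (Complex.ofReal ∘ fun i => |d i|) * (Vᴴ * V) *
            diagonal (Complex.ofReal ∘ fun i => |d i|)) * Vᴴ := by noncomm_ring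
      _ = V * (diagonal (Complex.ofReal ∘ d) * (Vᴴ * V) * diagonal (Complex.ofReal ∘ d)) * Vᴴ := by
          rw [hVV, Matrix.mul_one, Matrix.mul_one, Matrix.diagonal_mul_diagonal,
            Matrix.diagonal_mul_diagonal]
          congr 1
          funext i
          simp only [Function.comp_apply, ← Complex.ofReal_mul, abs_mul_abs_self]
      _ = (V * diagonal (Complex.ofReal ∘ d) * Vᴴ) * (V * diagonal (Complex.ofReal ∘ d) * Vᴴ) := by
          noncomm_ring
  set hA := Matrix.posSemidef_conjTranspose_mul_self X with hAdef
  set U : Matrix n n ℂ := ↑(hA.1.eigenvectorUnitary) with hU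
  set e : n → ℝ := hA.1.eigenvalues with he
  have hUU : star U * U = 1 := Unitary.coe_star_mul_self hA.1.eigenvectorUnitary
  have hAspec : Xᴴ * X = U * Matrix.diagonal (Complex.ofReal ∘ e) * star U := hA.1.spectral_theorem
  set T : Matrix n n ℂ := U * diagonal (((↑) : ℝ → ℂ) ∘ (√·) ∘ e) * star U with hT
  have hTpsd : T.PosSemidef := by
    rw [hT, Matrix.star_eq_conjTranspose]
    apply Matrix.PosSemidef.mul_mul_conjTranspose_same
    apply Matrix.PosSemidef.diagonal
    intro i
    simp only [Function.comp_apply]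
    exact Complex.zero_le_real.mpr (Real.sqrt_nonneg _)
  have hTsq : T ^ 2 = Xᴴ * X := by
    rw [hAspec, pow_two, hT]
    calc U * diagonal (((↑) : ℝ → ℂ) ∘ (√·) ∘ e) * star U * (U * diagonal (((↑) : ℝ → ℂ) ∘ (√·) ∘ e) * star U)
        = U * (diagonal (((↑) : ℝ → ℂ) ∘ (√·) ∘ e) * (star U * U) * diagonal (((↑) : ℝ → ℂ) ∘ (√·) ∘ e)) * star U := by
          noncomm_ring
      _ = U * Matrix.diagonal (Complex.ofReal ∘ e) * star U := by
          rw [hUU, Matrix.mul_one, Matrix.diagonal_mul_diagonal]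
          congr 3
          funext i
          simp only [Function.comp_apply, ← Complex.ofReal_mul, Real.mul_self_sqrt (hA.eigenvalues_nonneg i)]
          exact congrArg _ (Real.mul_self_sqrt (hA.eigenvalues_nonneg i))
  have hsqrt : T = Q := by
    open scoped MatrixOrder in
    exact (CFC.sq_eq_sq_iff T Q (Matrix.nonneg_iff_posSemidef.mpr hTpsd)
      (Matrix.nonneg_iff_posSemidef.mpr hQpsd)).mp (hTsq.trans hQsq.symm)
  have htn : traceNorm X = T.trace.re := rfl
  rw [htn, hsqrt, hQ, ← Matrix.star_eq_conjTranspose, Matrix.trace_mul_cycle,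
    hVV, Matrix.one_mul, Matrix.trace_diagonal]
  simp

lemma traceNorm_le_of_sandwich {n : Type*} [Fintype n] [DecidableEq n] {X M : Matrix n n ℂ}
    (hX : X.IsHermitian) (h1 : (M - X).PosSemidef) (h2 : (M + X).PosSemidef) :
    traceNorm X ≤ M.trace.re := by
  classical
  set V : Matrix n n ℂ := ↑(hX.eigenvectorUnitary) with hV
  have hVV' : V * star V = 1 := Unitary.coe_mul_star_self hX.eigenvectorUnitary
  set g : n → ℝ := fun i =>
    (dotProduct (star ⇑(hX.eigenvectorBasis i)) (M *ᵥ ⇑(hX.eigenvectorBasis i))).re with hg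
  have habs : ∀ i, |hX.eigenvalues i| ≤ g i := by
    intro i
    set v := ⇑(hX.eigenvectorBasis i)
    have hev : hX.eigenvalues i = (dotProduct (star v) (X *ᵥ v)).re := hX.eigenvalues_eq i
    have hu : 0 ≤ (dotProduct (star v) ((M - X) *ᵥ v)).re := h1.re_dotProduct_nonneg v
    have hl : 0 ≤ (dotProduct (star v) ((M + X) *ᵥ v)).re := h2.re_dotProduct_nonneg v
    rw [Matrix.sub_mulVec, dotProduct_sub, Complex.sub_re] at hu
    rw [Matrix.add_mulVec, dotProduct_add, Complex.add_re] at hl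
    rw [abs_le]
    constructor
    · rw [hev]; linarith
    · rw [hev]; linarith
  have hsum : ∑ i, g i = M.trace.re := by
    have hdiag : ∀ j, (Vᴴ * M * V) j j
        = dotProduct (star ⇑(hX.eigenvectorBasis j)) (M *ᵥ ⇑(hX.eigenvectorBasis j)) := by
      intro j
      simp only [Matrix.mul_apply, dotProduct, Matrix.mulVec, Matrix.conjTranspose_apply,
        Pi.star_apply, IsHermitian.eigenvectorUnitary_apply, hV]
      simp only [Finset.sum_mul, Finset.mul_sum]
      rw [Finset.sum_comm]
      apply Finset.sum_congr rfl; intro k _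
      apply Finset.sum_congr rfl; intro l _
      ring
    have htr : (Vᴴ * M * V).trace = M.trace := by
      rw [Matrix.trace_mul_cycle, ← Matrix.star_eq_conjTranspose, hVV',
        Matrix.one_mul]
    calc ∑ i, g i = ((Vᴴ * M * V).trace).re := by
          rw [Matrix.trace, Complex.re_sum]
          exact Finset.sum_congr rfl fun i _ => congrArg Complex.re (hdiag i).symm
      _ = M.trace.re := by rw [htr]
  rw [traceNorm_hermitian hX, ← hsum]
  exact Finset.sum_le_sum fun i _ => habs i

lemma psd_real_smul {n : Type*} [Fintype n] [DecidableEq n] {c : ℝ} (hc : 0 ≤ c)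
    {A : Matrix n n ℂ} (hA : A.PosSemidef) : ((c : ℂ) • A).PosSemidef := by
  refine ⟨?_, fun x => ?_⟩
  · show ((c : ℂ) • A)ᴴ = (c : ℂ) • A
    rw [Matrix.conjTranspose_smul, Complex.star_def, Complex.conj_ofReal, hA.1.eq]
  · exact (hA.smul (a := (c : ℂ)) (by exact_mod_cast hc)).2 x

lemma psd_sum {n : Type*} [Fintype n] [DecidableEq n] {ι : Type*} (s : Finset ι)
    (f : ι → Matrix n n ℂ) (h : ∀ i ∈ s, (f i).PosSemidef) : (∑ i ∈ s, f i).PosSemidef :=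
  Finset.sum_induction f _ (fun _ _ ha hb => ha.add hb) .zero h

/-- Mixing lemma for contractions (‖S‖ ≤ 1). -/
theorem mixing_lemma_contraction {N m : ℕ} (S : Matrix (Fin N) (Fin N) ℂ)
    (hS : opNorm S ≤ 1)
    (R : Fin m → Matrix (Fin N) (Fin N) ℂ)
    (p : Fin m → ℝ) (hp : ∀ j, 0 ≤ p j) (hp1 : ∑ j, p j = 1)
    (a b : ℝ) (ha0 : 0 ≤ a) (hb0 : 0 ≤ b)
    (ha : ∀ j, opNorm (R j - S) ≤ a)
    (hb : opNorm ((∑ j, (p j : ℂ) • R j) - S) ≤ b)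
    (ρ : Matrix (Fin N) (Fin N) ℂ) (hρ : ρ.PosSemidef) (hρ1 : ρ.trace = 1) :
    traceNorm ((∑ j, (p j : ℂ) • (R j * ρ * (R j)ᴴ)) - S * ρ * Sᴴ) ≤ a ^ 2 + 2 * b := by
  classical
  set Δ : Matrix (Fin N) (Fin N) ℂ := (∑ j, (p j : ℂ) • R j) - S with hΔ
  set X : Matrix (Fin N) (Fin N) ℂ :=
    (∑ j, (p j : ℂ) • (R j * ρ * (R j)ᴴ)) - S * ρ * Sᴴ with hXdef
  set P : Matrix (Fin N) (Fin N) ℂ := ∑ j, (p j : ℂ) • ((R j - S) * ρ * (R j - S)ᴴ) with hP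
  have hps : ∑ j, ((p j : ℂ)) = 1 := by exact_mod_cast hp1
  have hρre : ρ.trace.re = 1 := by rw [hρ1]; rfl
  -- decomposition
  have h1 : ∀ j, (p j : ℂ) • (R j * ρ * (R j)ᴴ)
      = (p j : ℂ) • ((R j - S) * ρ * (R j - S)ᴴ) + ((p j : ℂ) • R j) * ρ * Sᴴ
        + S * ρ * ((p j : ℂ) • R j)ᴴ - (p j : ℂ) • (S * ρ * Sᴴ) := by
    intro j
    have hst : star ((p j : ℂ)) = ((p j : ℂ)) := by
      rw [Complex.star_def, Complex.conj_ofReal]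
    simp only [Matrix.conjTranspose_sub, Matrix.conjTranspose_smul, hst, Matrix.sub_mul,
      Matrix.mul_sub, smul_sub, Matrix.smul_mul, Matrix.mul_smul]
    abel
  have hdecomp : X = P + (Δ * ρ * Sᴴ + S * ρ * Δᴴ) := by
    have h2 : ∑ j, (p j : ℂ) • (R j * ρ * (R j)ᴴ)
        = P + (∑ j, (p j : ℂ) • R j) * ρ * Sᴴ + S * ρ * (∑ j, (p j : ℂ) • R j)ᴴ
          - S * ρ * Sᴴ := by
      rw [Finset.sum_congr rfl fun j _ => h1 j]
      rw [Finset.sum_sub_distrib, Finset.sum_add_distrib, Finset.sum_add_distrib]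
      rw [← Finset.sum_smul, hps, one_smul, ← Finset.sum_mul, ← Finset.sum_mul,
        Matrix.conjTranspose_sum, Finset.mul_sum]
    rw [hXdef, h2, hΔ]
    simp only [Matrix.conjTranspose_sub, Matrix.sub_mul, Matrix.mul_sub]
    abel
  -- positivity of P
  have hPpsd : P.PosSemidef := by
    apply psd_sum
    intro j _
    exact psd_real_smul (hp j) (hρ.mul_mul_conjTranspose_same _)
  -- trace bound for P
  have hPtr : P.trace.re ≤ a ^ 2 := by
    have : P.trace.re = ∑ j, p j * ((R j - S) * ρ * (R j - S)ᴴ).trace.re := by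
      rw [hP, Matrix.trace_sum, Complex.re_sum]
      apply Finset.sum_congr rfl
      intro j _
      rw [Matrix.trace_smul, smul_eq_mul, Complex.mul_re, Complex.ofReal_re,
        Complex.ofReal_im, zero_mul, sub_zero]
    rw [this]
    calc ∑ j, p j * ((R j - S) * ρ * (R j - S)ᴴ).trace.re
        ≤ ∑ j, p j * a ^ 2 := by
          apply Finset.sum_le_sum
          intro j _
          apply mul_le_mul_of_nonneg_left _ (hp j)
          calc ((R j - S) * ρ * (R j - S)ᴴ).trace.re
              ≤ opNorm (R j - S) ^ 2 * ρ.trace.re := trace_conj_le hρ _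
            _ = opNorm (R j - S) ^ 2 := by rw [hρre, mul_one]
            _ ≤ a ^ 2 := by
                apply pow_le_pow_left₀ (norm_nonneg _) (ha j)
      _ = a ^ 2 := by rw [← Finset.sum_mul, hp1, one_mul]
  -- trace bounds for Δ and S conjugations
  have hΔtr : (Δ * ρ * Δᴴ).trace.re ≤ b ^ 2 := by
    calc (Δ * ρ * Δᴴ).trace.re ≤ opNorm Δ ^ 2 * ρ.trace.re := trace_conj_le hρ _
      _ = opNorm Δ ^ 2 := by rw [hρre, mul_one]
      _ ≤ b ^ 2 := pow_le_pow_left₀ (norm_nonneg _) hb 2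
  have hStr : (S * ρ * Sᴴ).trace.re ≤ 1 := by
    calc (S * ρ * Sᴴ).trace.re ≤ opNorm S ^ 2 * ρ.trace.re := trace_conj_le hρ _
      _ = opNorm S ^ 2 := by rw [hρre, mul_one]
      _ ≤ 1 := by
          calc opNorm S ^ 2 ≤ 1 ^ 2 := pow_le_pow_left₀ (norm_nonneg _) hS 2
            _ = 1 := one_pow 2
  -- Hermitian X
  have hcross : ∀ (A B : Matrix (Fin N) (Fin N) ℂ), (A * ρ * Bᴴ)ᴴ = B * ρ * Aᴴ := by
    intro A B
    rw [Matrix.conjTranspose_mul, Matrix.conjTranspose_mul, Matrix.conjTranspose_conjTranspose,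
      hρ.1.eq, ← Matrix.mul_assoc]
  have hXherm : X.IsHermitian := by
    show Xᴴ = X
    rw [hdecomp, Matrix.conjTranspose_add, hPpsd.1.eq, Matrix.conjTranspose_add,
      hcross, hcross]
    abel
  -- main estimate for every t > 0
  have hmain : ∀ t : ℝ, 0 < t → traceNorm X ≤ a ^ 2 + t * b ^ 2 + t⁻¹ := by
    intro t ht
    set s : ℝ := Real.sqrt t with hs
    have hs0 : 0 < s := Real.sqrt_pos.mpr ht
    have hss : (s : ℂ) * (s : ℂ) = (t : ℂ) := by
      rw [← Complex.ofReal_mul, hs, Real.mul_self_sqrt ht.le]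
    have hss' : ((s⁻¹ : ℝ) : ℂ) * ((s⁻¹ : ℝ) : ℂ) = ((t⁻¹ : ℝ) : ℂ) := by
      rw [← Complex.ofReal_mul, ← mul_inv, hs, Real.mul_self_sqrt ht.le]
    have hss1 : (s : ℂ) * ((s⁻¹ : ℝ) : ℂ) = 1 := by
      rw [← Complex.ofReal_mul, mul_inv_cancel₀ hs0.ne', Complex.ofReal_one]
    set M : Matrix (Fin N) (Fin N) ℂ :=
      P + ((t : ℂ) • (Δ * ρ * Δᴴ) + ((t⁻¹ : ℝ) : ℂ) • (S * ρ * Sᴴ)) with hM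
    set Em : Matrix (Fin N) (Fin N) ℂ := (s : ℂ) • Δ - ((s⁻¹ : ℝ) : ℂ) • S with hEm
    set Ep : Matrix (Fin N) (Fin N) ℂ := (s : ℂ) • Δ + ((s⁻¹ : ℝ) : ℂ) • S with hEp
    have hconj : ∀ (c : ℝ) (A : Matrix (Fin N) (Fin N) ℂ), ((c : ℂ) • A)ᴴ = (c : ℂ) • Aᴴ := by
      intro c A
      rw [Matrix.conjTranspose_smul, Complex.star_def, Complex.conj_ofReal]
    have hEmval : Em * ρ * Emᴴ
        = (t : ℂ) • (Δ * ρ * Δᴴ) + ((t⁻¹ : ℝ) : ℂ) • (S * ρ * Sᴴ)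
          - (Δ * ρ * Sᴴ + S * ρ * Δᴴ) := by
      rw [hEm, Matrix.conjTranspose_sub, hconj, hconj]
      simp only [Matrix.sub_mul, Matrix.mul_sub, Matrix.smul_mul, Matrix.mul_smul,
        smul_smul, smul_sub, hss, hss', hss1]
      rw [mul_comm ((s⁻¹ : ℝ) : ℂ) ((s : ℝ) : ℂ), hss1]
      simp only [one_smul]
      abel
    have hEpval : Ep * ρ * Epᴴ
        = (t : ℂ) • (Δ * ρ * Δᴴ) + ((t⁻¹ : ℝ) : ℂ) • (S * ρ * Sᴴ)
          + (Δ * ρ * Sᴴ + S * ρ * Δᴴ) := by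
      rw [hEp, Matrix.conjTranspose_add, hconj, hconj]
      simp only [Matrix.add_mul, Matrix.mul_add, Matrix.smul_mul, Matrix.mul_smul,
        smul_smul, smul_add, hss, hss', hss1]
      rw [mul_comm ((s⁻¹ : ℝ) : ℂ) ((s : ℝ) : ℂ), hss1]
      simp only [one_smul]
      abel
    have hMX1 : M - X = Em * ρ * Emᴴ := by
      rw [hM, hdecomp, hEmval]
      abel
    have hMX2 : M + X = (P + P) + Ep * ρ * Epᴴ := by
      rw [hM, hdecomp, hEpval]
      abel
    have hpsd1 : (M - X).PosSemidef := by
      rw [hMX1]; exact hρ.mul_mul_conjTranspose_same _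
    have hpsd2 : (M + X).PosSemidef := by
      rw [hMX2]
      exact (hPpsd.add hPpsd).add (hρ.mul_mul_conjTranspose_same _)
    have hbound := traceNorm_le_of_sandwich hXherm hpsd1 hpsd2
    have hMtr : M.trace.re ≤ a ^ 2 + t * b ^ 2 + t⁻¹ := by
      have hre : ∀ (c : ℝ) (A : Matrix (Fin N) (Fin N) ℂ),
          ((c : ℂ) • A).trace.re = c * A.trace.re := by
        intro c A
        rw [Matrix.trace_smul, smul_eq_mul, Complex.mul_re, Complex.ofReal_re,
          Complex.ofReal_im, zero_mul, sub_zero]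
      have : M.trace.re = P.trace.re + t * (Δ * ρ * Δᴴ).trace.re
          + t⁻¹ * (S * ρ * Sᴴ).trace.re := by
        rw [hM, Matrix.trace_add, Matrix.trace_add, Complex.add_re, Complex.add_re]
        have h3 : ((t : ℂ) • (Δ * ρ * Δᴴ)).trace.re = t * (Δ * ρ * Δᴴ).trace.re := hre t _
        rw [h3, hre t⁻¹ _]
        ring
      rw [this]
      have ht1 : t * (Δ * ρ * Δᴴ).trace.re ≤ t * b ^ 2 :=
        mul_le_mul_of_nonneg_left hΔtr ht.le
      have ht2 : t⁻¹ * (S * ρ * Sᴴ).trace.re ≤ t⁻¹ * 1 :=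
        mul_le_mul_of_nonneg_left hStr (by positivity)
      rw [mul_one] at ht2
      linarith
    exact hbound.trans hMtr
  -- conclude
  rcases eq_or_lt_of_le hb0 with hb' | hb'
  · have : a ^ 2 + 2 * b = a ^ 2 := by rw [← hb']; ring
    rw [this]
    apply le_of_forall_pos_le_add
    intro ε hε
    have h := hmain ε⁻¹ (by positivity)
    rw [← hb'] at h
    calc traceNorm X ≤ a ^ 2 + ε⁻¹ * 0 ^ 2 + (ε⁻¹)⁻¹ := h
      _ = a ^ 2 + ε := by rw [inv_inv]; ring
  · have h := hmain b⁻¹ (by positivity)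
    calc traceNorm X ≤ a ^ 2 + b⁻¹ * b ^ 2 + (b⁻¹)⁻¹ := h
      _ = a ^ 2 + 2 * b := by
          rw [inv_inv]
          field_simp
          ring
end
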